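/- Let $m > 1$ and let $a(\tau) = 1 - e^{-\tau}$. Suppose $\phi : (\tau_0, \tau_0 + \bar T) \to [0,\infty)$ is continuous, locally integrable near $\tau_0$, and satisfies $\phi(\tau) \le C_1 a(\tau - \tau_0)^{-1/2} + C_2 \int_{\tau_0}^{\tau} a(\tau - s)^{-1/p}(\phi(s) + K)\, ds$ for some $p \in (1,2)$, constants $C_1, C_2, K \ge 0$. Then there exists $\bar T > 0$, depending only on $C_2, K, p$, such that $\phi(\tau) \le 2(C_1 + 1) a(\tau - \tau_0)^{-1/2}$ for $\tau \in (\tau_0, \tau_0 + \bar T)$. -/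

import Mathlib

open MeasureTheory Real Filter
open scoped ENNReal

noncomputable section

namespace GronwallAux

open Set


lemma measurable_rpow_c (e : ℝ) : Measurable (fun t : ℝ => t ^ e) :=
  measurable_of_continuousOn_compl_singleton 0
    (continuousOn_id.rpow_const (fun x hx => Or.inl hx))

lemma one_sub_exp_le (t : ℝ) : 1 - Real.exp (-t) ≤ t := by
  nlinarith [Real.add_one_le_exp (-t)]

lemma half_le_one_sub_exp {t : ℝ} (h0 : 0 ≤ t) (h1 : t ≤ 1) :
    t / 2 ≤ 1 - Real.exp (-t) := by
  have hE := Real.add_one_le_exp t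
  have hEpos : 0 < Real.exp t := Real.exp_pos t
  have hinv : Real.exp (-t) * Real.exp t = 1 := by
    rw [← Real.exp_add]; simp
  nlinarith [Real.exp_pos (-t)]

lemma one_sub_exp_pos {t : ℝ} (h0 : 0 < t) : 0 < 1 - Real.exp (-t) := by
  have : Real.exp (-t) < 1 := by
    rw [Real.exp_lt_one_iff]; linarith
  linarith

lemma lint_left {c d β : ℝ} (hcd : c < d) (hβ0 : 0 < β) (hβ1 : β < 1) :
    ∫⁻ s in Ioo c d, ENNReal.ofReal ((s - c) ^ (-β)) =
      ENNReal.ofReal ((d - c) ^ (1 - β) / (1 - β)) := by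
  have hii : IntervalIntegrable (fun x : ℝ => x ^ (-β)) volume 0 (d - c) :=
    intervalIntegral.intervalIntegrable_rpow' (by linarith)
  have hii2 : IntervalIntegrable (fun s : ℝ => (s - c) ^ (-β)) volume c d := by
    have h := hii.comp_sub_right c
    simpa using h
  have hio : IntegrableOn (fun s : ℝ => (s - c) ^ (-β)) (Ioo c d) := by
    rw [← intervalIntegrable_iff_integrableOn_Ioo_of_le hcd.le]
    exact hii2
  have hval : ∫ s in Ioo c d, (s - c) ^ (-β) = (d - c) ^ (1 - β) / (1 - β) := by
    rw [← integral_Ioc_eq_integral_Ioo, ← intervalIntegral.integral_of_le hcd.le,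
      intervalIntegral.integral_comp_sub_right (fun x => x ^ (-β)) c, sub_self,
      integral_rpow (Or.inl (by linarith))]
    rw [Real.zero_rpow (by intro h; nlinarith [h] : -β + 1 ≠ 0)]
    rw [show -β + 1 = 1 - β by ring]
    ring
  rw [← hval]
  refine (ofReal_integral_eq_lintegral_ofReal hio ?_).symm
  refine (ae_restrict_iff' measurableSet_Ioo).2 (Filter.Eventually.of_forall ?_)
  intro s hs
  exact Real.rpow_nonneg (by linarith [hs.1]) _

lemma lint_right {c d α : ℝ} (hcd : c < d) (hα0 : 0 < α) (hα1 : α < 1) :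
    ∫⁻ s in Ioo c d, ENNReal.ofReal ((d - s) ^ (-α)) =
      ENNReal.ofReal ((d - c) ^ (1 - α) / (1 - α)) := by
  have hii : IntervalIntegrable (fun x : ℝ => x ^ (-α)) volume 0 (d - c) :=
    intervalIntegral.intervalIntegrable_rpow' (by linarith)
  have hii2 : IntervalIntegrable (fun s : ℝ => (d - s) ^ (-α)) volume c d := by
    have h := hii.comp_sub_left d
    have e1 : d - (0:ℝ) = d := by ring
    have e2 : d - (d - c) = c := by ring
    rw [e1, e2] at h
    exact h.symm
  have hio : IntegrableOn (fun s : ℝ => (d - s) ^ (-α)) (Ioo c d) := by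
    rw [← intervalIntegrable_iff_integrableOn_Ioo_of_le hcd.le]
    exact hii2
  have hval : ∫ s in Ioo c d, (d - s) ^ (-α) = (d - c) ^ (1 - α) / (1 - α) := by
    rw [← integral_Ioc_eq_integral_Ioo, ← intervalIntegral.integral_of_le hcd.le,
      intervalIntegral.integral_comp_sub_left (fun x => x ^ (-α)) d, sub_self,
      integral_rpow (Or.inl (by linarith))]
    rw [Real.zero_rpow (by intro h; nlinarith [h] : -α + 1 ≠ 0)]
    rw [show -α + 1 = 1 - α by ring]
    ring
  rw [← hval]
  refine (ofReal_integral_eq_lintegral_ofReal hio ?_).symm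
  refine (ae_restrict_iff' measurableSet_Ioo).2 (Filter.Eventually.of_forall ?_)
  intro s hs
  exact Real.rpow_nonneg (by linarith [hs.2]) _


/-- half-power estimate: `((T/2))^(e) ≤ 2 * T^(e)` stuff packaged:
for `T > 0` and `u ≤ 1`, `(T/2) ^ u ≤ 2 * T ^ u`. -/
lemma half_rpow_le {T u : ℝ} (hT : 0 < T) (hu : u ≤ 1) (hu2 : -1 ≤ u) :
    (T / 2) ^ u ≤ 2 * T ^ u := by
  have h1 : (T / 2 : ℝ) = T * (1 / 2) := by ring
  rw [h1, Real.mul_rpow hT.le (by norm_num)]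
  have h2 : ((1:ℝ)/2) ^ u = 2 ^ (-u) := by
    rw [one_div, Real.inv_rpow (by norm_num : (0:ℝ) ≤ 2), ← Real.rpow_neg (by norm_num)]
  have h3 : (2:ℝ) ^ (-u) ≤ 2 ^ (1:ℝ) := by
    apply Real.rpow_le_rpow_of_exponent_le one_le_two
    linarith
  rw [h2]
  have h4 : (0:ℝ) ≤ T ^ u := Real.rpow_nonneg hT.le u
  rw [Real.rpow_one] at h3
  nlinarith

lemma lemE {r τ α β : ℝ} (hrτ : r < τ) (hα0 : 0 < α) (hα1 : α < 1)
    (hβ0 : 0 < β) (hβ1 : β < 1) :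
    ∫⁻ s in Ioo r τ, ENNReal.ofReal ((τ - s) ^ (-α) * (s - r) ^ (-β)) ≤
      ENNReal.ofReal ((2 / (1 - α) + 2 / (1 - β)) * (τ - r) ^ (1 - α - β)) := by
  set T : ℝ := τ - r with hTdef
  have hT : 0 < T := by simp [hTdef]; linarith
  set md : ℝ := (r + τ) / 2 with hmd
  have hm1 : r < md := by simp only [hmd]; linarith
  have hm2 : md < τ := by simp only [hmd]; linarith
  have hmr : md - r = T / 2 := by simp only [hmd, hTdef]; ring
  have hτm : τ - md = T / 2 := by simp only [hmd, hTdef]; ring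
  have hT2 : 0 < T / 2 := by linarith
  -- split the integral
  have hae : (Ioo r τ : Set ℝ) =ᵐ[volume] (Ioo r md ∪ Ioo md τ : Set ℝ) := by
    rw [Filter.eventuallyEq_set]
    have hiff : ∀ x : ℝ, x ≠ md → (x ∈ Ioo r τ ↔ x ∈ (Ioo r md ∪ Ioo md τ)) := by
      intro x hx
      simp only [mem_Ioo, mem_union]
      constructor
      · rintro ⟨h1, h2⟩
        rcases lt_or_gt_of_ne hx with h | h
        · exact Or.inl ⟨h1, h⟩
        · exact Or.inr ⟨h, h2⟩
      · rintro (⟨h1, h2⟩ | ⟨h1, h2⟩)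
        · exact ⟨h1, by linarith⟩
        · exact ⟨by linarith, h2⟩
    have hsub : {x : ℝ | x ∈ Ioo r τ ↔ x ∈ (Ioo r md ∪ Ioo md τ)}ᶜ ⊆ {md} := by
      intro x hx
      by_contra hxm
      exact hx (hiff x hxm)
    have h0 : volume ({md} : Set ℝ) = 0 := measure_singleton md
    have hnull := measure_mono_null hsub h0
    exact eventually_of_mem (compl_mem_ae_iff.mpr hnull) (fun x hx => by simpa using hx)
  rw [setLIntegral_congr hae]
  have hdisj : Disjoint (Ioo r md) (Ioo md τ) := by
    apply Set.disjoint_left.mpr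
    rintro x ⟨_, h1⟩ ⟨h2, _⟩
    linarith
  rw [lintegral_union measurableSet_Ioo hdisj]
  -- piece 1
  have hp1 : ∫⁻ s in Ioo r md, ENNReal.ofReal ((τ - s) ^ (-α) * (s - r) ^ (-β)) ≤
      ENNReal.ofReal (2 / (1 - β) * T ^ (1 - α - β)) := by
    have hmono : ∀ s ∈ Ioo r md, ENNReal.ofReal ((τ - s) ^ (-α) * (s - r) ^ (-β)) ≤
        ENNReal.ofReal ((T/2) ^ (-α)) * ENNReal.ofReal ((s - r) ^ (-β)) := by
      intro s hs
      rw [← ENNReal.ofReal_mul (Real.rpow_nonneg hT2.le _)]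
      apply ENNReal.ofReal_le_ofReal
      apply mul_le_mul_of_nonneg_right _ (Real.rpow_nonneg (by linarith [hs.1]) _)
      apply Real.rpow_le_rpow_of_nonpos hT2 (by linarith [hs.2, hτm] : T/2 ≤ τ - s) (by linarith)
    calc ∫⁻ s in Ioo r md, ENNReal.ofReal ((τ - s) ^ (-α) * (s - r) ^ (-β))
        ≤ ∫⁻ s in Ioo r md, ENNReal.ofReal ((T/2) ^ (-α)) * ENNReal.ofReal ((s - r) ^ (-β)) :=
          setLIntegral_mono' measurableSet_Ioo hmono
      _ = ENNReal.ofReal ((T/2) ^ (-α)) * ∫⁻ s in Ioo r md, ENNReal.ofReal ((s - r) ^ (-β)) :=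
          lintegral_const_mul' _ _ ENNReal.ofReal_ne_top
      _ = ENNReal.ofReal ((T/2) ^ (-α)) * ENNReal.ofReal ((md - r) ^ (1 - β) / (1 - β)) := by
          rw [lint_left hm1 hβ0 hβ1]
      _ ≤ ENNReal.ofReal (2 / (1 - β) * T ^ (1 - α - β)) := by
          rw [← ENNReal.ofReal_mul (Real.rpow_nonneg hT2.le _)]
          apply ENNReal.ofReal_le_ofReal
          rw [hmr]
          rw [div_eq_mul_inv ((T/2) ^ (1-β)), ← mul_assoc, ← Real.rpow_add hT2]
          rw [show -α + (1 - β) = 1 - α - β by ring]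
          have hh := half_rpow_le hT (by linarith : 1 - α - β ≤ 1) (by linarith : -1 ≤ 1 - α - β)
          have hinv : (0:ℝ) < (1 - β)⁻¹ := by
            rw [inv_pos]; linarith
          calc (T/2) ^ (1 - α - β) * (1-β)⁻¹ ≤ 2 * T ^ (1 - α - β) * (1-β)⁻¹ := by
                apply mul_le_mul_of_nonneg_right hh hinv.le
            _ = 2 / (1 - β) * T ^ (1 - α - β) := by ring
  -- piece 2
  have hp2 : ∫⁻ s in Ioo md τ, ENNReal.ofReal ((τ - s) ^ (-α) * (s - r) ^ (-β)) ≤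
      ENNReal.ofReal (2 / (1 - α) * T ^ (1 - α - β)) := by
    have hmono : ∀ s ∈ Ioo md τ, ENNReal.ofReal ((τ - s) ^ (-α) * (s - r) ^ (-β)) ≤
        ENNReal.ofReal ((T/2) ^ (-β)) * ENNReal.ofReal ((τ - s) ^ (-α)) := by
      intro s hs
      rw [← ENNReal.ofReal_mul (Real.rpow_nonneg hT2.le _)]
      apply ENNReal.ofReal_le_ofReal
      rw [mul_comm]
      apply mul_le_mul_of_nonneg_right _ (Real.rpow_nonneg (by linarith [hs.2] : (0:ℝ) ≤ τ - s) _)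
      apply Real.rpow_le_rpow_of_nonpos hT2 (by linarith [hs.1, hmr] : T/2 ≤ s - r) (by linarith)
    calc ∫⁻ s in Ioo md τ, ENNReal.ofReal ((τ - s) ^ (-α) * (s - r) ^ (-β))
        ≤ ∫⁻ s in Ioo md τ, ENNReal.ofReal ((T/2) ^ (-β)) * ENNReal.ofReal ((τ - s) ^ (-α)) :=
          setLIntegral_mono' measurableSet_Ioo hmono
      _ = ENNReal.ofReal ((T/2) ^ (-β)) * ∫⁻ s in Ioo md τ, ENNReal.ofReal ((τ - s) ^ (-α)) :=
          lintegral_const_mul' _ _ ENNReal.ofReal_ne_top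
      _ = ENNReal.ofReal ((T/2) ^ (-β)) * ENNReal.ofReal ((τ - md) ^ (1 - α) / (1 - α)) := by
          rw [lint_right hm2 hα0 hα1]
      _ ≤ ENNReal.ofReal (2 / (1 - α) * T ^ (1 - α - β)) := by
          rw [← ENNReal.ofReal_mul (Real.rpow_nonneg hT2.le _)]
          apply ENNReal.ofReal_le_ofReal
          rw [hτm]
          rw [div_eq_mul_inv ((T/2) ^ (1-α)), ← mul_assoc, ← Real.rpow_add hT2]
          rw [show -β + (1 - α) = 1 - α - β by ring]
          have hh := half_rpow_le hT (by linarith : 1 - α - β ≤ 1) (by linarith : -1 ≤ 1 - α - β)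
          have hinv : (0:ℝ) < (1 - α)⁻¹ := by
            rw [inv_pos]; linarith
          calc (T/2) ^ (1 - α - β) * (1-α)⁻¹ ≤ 2 * T ^ (1 - α - β) * (1-α)⁻¹ := by
                apply mul_le_mul_of_nonneg_right hh hinv.le
            _ = 2 / (1 - α) * T ^ (1 - α - β) := by ring
  calc _ ≤ ENNReal.ofReal (2 / (1 - β) * T ^ (1 - α - β)) +
        ENNReal.ofReal (2 / (1 - α) * T ^ (1 - α - β)) := add_le_add hp1 hp2
    _ = ENNReal.ofReal ((2 / (1 - α) + 2 / (1 - β)) * T ^ (1 - α - β)) := by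
        have h1 : (0:ℝ) ≤ 2 / (1 - β) * T ^ (1 - α - β) :=
          mul_nonneg (div_nonneg (by norm_num) (by linarith)) (Real.rpow_nonneg hT.le _)
        have h2 : (0:ℝ) ≤ 2 / (1 - α) * T ^ (1 - α - β) :=
          mul_nonneg (div_nonneg (by norm_num) (by linarith)) (Real.rpow_nonneg hT.le _)
        rw [← ENNReal.ofReal_add h1 h2]
        ring_nf


/-- kernel upper bound: for `0 < t ≤ 1`, `0 ≤ e ≤ 1`:
`(1 - exp (-t)) ^ (-e) ≤ 2 * t ^ (-e)`. -/
lemma aker_le {t e : ℝ} (ht0 : 0 < t) (ht1 : t ≤ 1) (he0 : 0 ≤ e) (he1 : e ≤ 1) :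
    (1 - Real.exp (-t)) ^ (-e) ≤ 2 * t ^ (-e) := by
  have h1 : (1 - Real.exp (-t)) ^ (-e) ≤ (t / 2) ^ (-e) :=
    Real.rpow_le_rpow_of_nonpos (by linarith) (half_le_one_sub_exp ht0.le ht1) (by linarith)
  have h2 : (t / 2 : ℝ) = t * (1 / 2) := by ring
  have h3 : ((1:ℝ)/2) ^ (-e) = 2 ^ e := by
    rw [one_div, Real.inv_rpow (by norm_num : (0:ℝ) ≤ 2), ← Real.rpow_neg (by norm_num), neg_neg]
  have h4 : (2:ℝ) ^ e ≤ 2 := by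
    have := Real.rpow_le_rpow_of_exponent_le one_le_two he1
    rwa [Real.rpow_one] at this
  have h5 : (0:ℝ) ≤ t ^ (-e) := Real.rpow_nonneg ht0.le _
  calc (1 - Real.exp (-t)) ^ (-e) ≤ (t / 2) ^ (-e) := h1
    _ = t ^ (-e) * 2 ^ e := by rw [h2, Real.mul_rpow ht0.le (by norm_num), h3]
    _ ≤ 2 * t ^ (-e) := by nlinarith

/-- kernel lower bound -/
lemma le_aker {t e : ℝ} (ht0 : 0 < t) (he0 : 0 ≤ e) :
    t ^ (-e) ≤ (1 - Real.exp (-t)) ^ (-e) :=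
  Real.rpow_le_rpow_of_nonpos (one_sub_exp_pos ht0) (one_sub_exp_le t) (by linarith)

lemma one_le_aker {t e : ℝ} (ht0 : 0 < t) (he0 : 0 ≤ e) :
    (1:ℝ) ≤ (1 - Real.exp (-t)) ^ (-e) := by
  have h1 : 1 - Real.exp (-t) ≤ 1 := by
    have := Real.exp_pos (-t); linarith
  have := Real.rpow_le_rpow_of_nonpos (one_sub_exp_pos ht0) h1 (by linarith : -e ≤ 0)
  rwa [Real.one_rpow] at this


end GronwallAux

open GronwallAux

set_option maxHeartbeats 1000000 in
/-- Grönwall-type absorption lemma with singular kernel `a(τ)^{-1/p}`,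
`a(τ) = 1 - e^{-τ}`: if `φ ≥ 0` satisfies
`φ(τ) ≤ C₁ a(τ-τ₀)^{-1/2} + C₂ ∫_{τ₀}^τ a(τ-s)^{-1/p} (φ(s)+K) ds`, then there
is `T̄ > 0`, depending only on `C₂, K, p`, such that
`φ(τ) ≤ 2(C₁+1) a(τ-τ₀)^{-1/2}` on `(τ₀, τ₀+T̄)`. -/
theorem gronwall_singular_absorption (m : ℝ) (hm : 1 < m)
    (p C₂ K : ℝ) (hp1 : 1 < p) (hp2 : p < 2) (hC₂ : 0 ≤ C₂) (hK : 0 ≤ K) :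
    ∃ Tb : ℝ, 0 < Tb ∧ ∀ C₁ : ℝ, 0 ≤ C₁ → ∀ (τ₀ : ℝ) (φ : ℝ → ℝ),
      ContinuousOn φ (Set.Ioo τ₀ (τ₀ + Tb)) →
      (∀ τ ∈ Set.Ioo τ₀ (τ₀ + Tb), 0 ≤ φ τ) →
      (∀ τ ∈ Set.Ioo τ₀ (τ₀ + Tb),
        IntegrableOn
          (fun s => (1 - Real.exp (-(τ - s))) ^ (-(1 : ℝ) / p) * (φ s + K))
          (Set.Ioo τ₀ τ)) →
      (∀ τ ∈ Set.Ioo τ₀ (τ₀ + Tb),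
        φ τ ≤ C₁ * (1 - Real.exp (-(τ - τ₀))) ^ (-(1 : ℝ) / 2) +
          C₂ * ∫ s in Set.Ioo τ₀ τ,
            (1 - Real.exp (-(τ - s))) ^ (-(1 : ℝ) / p) * (φ s + K)) →
      ∀ τ ∈ Set.Ioo τ₀ (τ₀ + Tb),
        φ τ ≤ 2 * (C₁ + 1) * (1 - Real.exp (-(τ - τ₀))) ^ (-(1 : ℝ) / 2) := by
  classical
  have hp0 : 0 < p := by linarith
  set q : ℝ := 1 / p with hq_def
  have hq0 : 0 < q := by positivity
  have hqh : 1 / 2 < q := by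
    rw [hq_def]
    rw [div_lt_div_iff₀ (by norm_num) hp0]
    linarith
  have hq1 : q < 1 := by
    rw [hq_def, div_lt_one hp0]; exact hp1
  have h1q : 0 < 1 - q := by linarith
  set CE : ℝ := 2 / (1 - q) + 4 + 4 / (1 - q) with hCE_def
  have hCEpos : 0 < CE := by positivity
  have hCE1 : 1 / (1 - q) ≤ CE := by
    rw [hCE_def]
    have h2 : 1 / (1 - q) ≤ 2 / (1 - q) := by
      gcongr
      norm_num
    have h3 : 0 < 4 / (1 - q) := by positivity
    linarith
  set D : ℝ := 8 * C₂ * CE + 4 * C₂ * K / (1 - q) + 1 with hD_def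
  have hD1 : 1 ≤ D := by
    have h1 : 0 ≤ 8 * C₂ * CE := by positivity
    have h2 : 0 ≤ 4 * C₂ * K / (1 - q) := by positivity
    rw [hD_def]; linarith
  have hD0 : 0 < D := by linarith
  set Tb : ℝ := min 1 ((1 / (2 * D)) ^ ((1:ℝ) / (1 - q))) with hTb_def
  have hTb0 : 0 < Tb := lt_min one_pos (Real.rpow_pos_of_pos (by positivity) _)
  have hTb1 : Tb ≤ 1 := min_le_left _ _
  have hTbkey : Tb ^ (1 - q) ≤ 1 / (2 * D) := by
    calc Tb ^ (1-q) ≤ ((1/(2*D)) ^ ((1:ℝ)/(1-q))) ^ (1-q) :=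
          Real.rpow_le_rpow hTb0.le (min_le_right _ _) h1q.le
      _ = (1/(2*D)) ^ ((1/(1-q)) * (1-q)) := by
          rw [← Real.rpow_mul (by positivity)]
      _ = 1/(2*D) := by
          rw [div_mul_cancel₀ _ (by linarith : (1:ℝ) - q ≠ 0), Real.rpow_one]
  refine ⟨Tb, hTb0, ?_⟩
  intro C₁ hC₁ τ₀ φ hcont hpos hint hineq τ hτ
  obtain ⟨hτ1, hτ2⟩ := hτ
  -- normalize exponents
  have hexp_p : (-(1:ℝ) / p) = -q := by rw [hq_def]; ring
  have hexp_2 : (-(1:ℝ) / 2) = -(1/2 : ℝ) := by norm_num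
  simp only [hexp_p, hexp_2] at hint hineq ⊢
  -- measurable extension of φ
  set φ' : ℝ → ℝ := (Set.Ioo τ₀ (τ₀ + Tb)).piecewise φ (fun _ => 0) with hφ'def
  have hφ'meas : Measurable φ' :=
    hcont.measurable_piecewise continuousOn_const measurableSet_Ioo
  have hφ'eq : ∀ x ∈ Set.Ioo τ₀ (τ₀ + Tb), φ' x = φ x := fun x hx =>
    Set.piecewise_eq_of_mem _ _ _ hx
  -- the singular lintegral
  set Lf : ℝ → ℝ≥0∞ :=
    fun σ => ∫⁻ r in Set.Ioo τ₀ σ, ENNReal.ofReal ((σ - r) ^ (-q) * (φ r + K)) with hLf_def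
  have hmemJ : ∀ σ ∈ Set.Ioo τ₀ (τ₀ + Tb), ∀ r ∈ Set.Ioo τ₀ σ,
      r ∈ Set.Ioo τ₀ (τ₀ + Tb) := fun σ hσ r hr => ⟨hr.1, lt_trans hr.2 hσ.2⟩
  have hsr : ∀ σ ∈ Set.Ioo τ₀ (τ₀ + Tb), ∀ r ∈ Set.Ioo τ₀ σ,
      0 < σ - r ∧ σ - r ≤ 1 := by
    intro σ hσ r hr
    constructor
    · linarith [hr.2]
    · have := hσ.2; have := hr.1; linarith [hTb1]
  -- relation between the Bochner integral and Lf
  have hkey1 : ∀ σ ∈ Set.Ioo τ₀ (τ₀ + Tb),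
      ENNReal.ofReal (∫ s in Set.Ioo τ₀ σ, (1 - Real.exp (-(σ - s))) ^ (-q) * (φ s + K)) =
        ∫⁻ s in Set.Ioo τ₀ σ,
          ENNReal.ofReal ((1 - Real.exp (-(σ - s))) ^ (-q) * (φ s + K)) := by
    intro σ hσ
    apply ofReal_integral_eq_lintegral_ofReal (hint σ hσ)
    refine (ae_restrict_iff' measurableSet_Ioo).2 (Filter.Eventually.of_forall ?_)
    intro s hs
    have h1 : 0 < σ - s := (hsr σ hσ s hs).1
    exact mul_nonneg (Real.rpow_nonneg (one_sub_exp_pos h1).le _)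
      (add_nonneg (hpos s (hmemJ σ hσ s hs)) hK)
  have hLle : ∀ σ ∈ Set.Ioo τ₀ (τ₀ + Tb),
      Lf σ ≤ ENNReal.ofReal
        (∫ s in Set.Ioo τ₀ σ, (1 - Real.exp (-(σ - s))) ^ (-q) * (φ s + K)) := by
    intro σ hσ
    rw [hkey1 σ hσ, hLf_def]
    apply setLIntegral_mono' measurableSet_Ioo
    intro s hs
    apply ENNReal.ofReal_le_ofReal
    apply mul_le_mul_of_nonneg_right (le_aker (hsr σ hσ s hs).1 hq0.le)
      (add_nonneg (hpos s (hmemJ σ hσ s hs)) hK)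
  have hLfin : ∀ σ ∈ Set.Ioo τ₀ (τ₀ + Tb), Lf σ ≠ ⊤ := by
    intro σ hσ
    exact ne_top_of_le_ne_top ENNReal.ofReal_ne_top (hLle σ hσ)
  have hIle : ∀ σ ∈ Set.Ioo τ₀ (τ₀ + Tb),
      ENNReal.ofReal
        (∫ s in Set.Ioo τ₀ σ, (1 - Real.exp (-(σ - s))) ^ (-q) * (φ s + K)) ≤ 2 * Lf σ := by
    intro σ hσ
    rw [hkey1 σ hσ]
    calc ∫⁻ s in Set.Ioo τ₀ σ, ENNReal.ofReal ((1 - Real.exp (-(σ - s))) ^ (-q) * (φ s + K))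
        ≤ ∫⁻ s in Set.Ioo τ₀ σ, 2 * ENNReal.ofReal ((σ - s) ^ (-q) * (φ s + K)) := by
          apply setLIntegral_mono' measurableSet_Ioo
          intro s hs
          have hnn : 0 ≤ φ s + K := add_nonneg (hpos s (hmemJ σ hσ s hs)) hK
          have h1 := aker_le (hsr σ hσ s hs).1 (hsr σ hσ s hs).2 hq0.le hq1.le
          calc ENNReal.ofReal ((1 - Real.exp (-(σ - s))) ^ (-q) * (φ s + K))
              ≤ ENNReal.ofReal (2 * ((σ - s) ^ (-q) * (φ s + K))) := by
                apply ENNReal.ofReal_le_ofReal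
                rw [← mul_assoc]
                exact mul_le_mul_of_nonneg_right h1 hnn
            _ = 2 * ENNReal.ofReal ((σ - s) ^ (-q) * (φ s + K)) := by
                rw [ENNReal.ofReal_mul (by norm_num : (0:ℝ) ≤ 2)]
                norm_num
      _ = 2 * Lf σ := lintegral_const_mul' _ _ (by simp)
  -- pointwise bound on φ + K
  have hφK : ∀ σ ∈ Set.Ioo τ₀ (τ₀ + Tb),
      φ σ + K ≤ 2 * C₁ * (σ - τ₀) ^ (-(1/2:ℝ)) +
        C₂ * (∫ s in Set.Ioo τ₀ σ, (1 - Real.exp (-(σ - s))) ^ (-q) * (φ s + K)) + K := by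
    intro σ hσ
    have h := hineq σ hσ
    have ht0 : 0 < σ - τ₀ := by linarith [hσ.1]
    have ht1 : σ - τ₀ ≤ 1 := by linarith [hσ.2, hTb1]
    have h2 : (1 - Real.exp (-(σ - τ₀))) ^ (-(1/2:ℝ)) ≤ 2 * (σ - τ₀) ^ (-(1/2:ℝ)) :=
      aker_le ht0 ht1 (by norm_num) (by norm_num)
    linarith [mul_le_mul_of_nonneg_left h2 hC₁]
  -- now the fixed τ
  set T : ℝ := τ - τ₀ with hT_def
  have hT0 : 0 < T := by rw [hT_def]; linarith
  have hTltTb : T < Tb := by rw [hT_def]; linarith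
  have hT1 : T ≤ 1 := by linarith
  have hτJ : τ ∈ Set.Ioo τ₀ (τ₀ + Tb) := ⟨hτ1, hτ2⟩
  -- key Tonelli estimate
  have keyB : ∫⁻ s in Set.Ioo τ₀ τ, ENNReal.ofReal ((τ - s) ^ (-q)) * Lf s ≤
      ENNReal.ofReal (4 / (1 - q) * Tb ^ (1 - q)) * Lf τ := by
    set F : ℝ × ℝ → ℝ≥0∞ := fun x =>
      {y : ℝ × ℝ | τ₀ < y.2 ∧ y.2 < y.1}.indicator
        (fun y => ENNReal.ofReal ((τ - y.1) ^ (-q)) *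
          ENNReal.ofReal ((y.1 - y.2) ^ (-q) * (φ' y.2 + K))) x with hF_def
    have hSmeas : MeasurableSet {y : ℝ × ℝ | τ₀ < y.2 ∧ y.2 < y.1} :=
      (measurableSet_lt measurable_const measurable_snd).inter
        (measurableSet_lt measurable_snd measurable_fst)
    have hFmeas : Measurable F := by
      apply Measurable.indicator _ hSmeas
      refine Measurable.mul (f := fun y : ℝ × ℝ => ENNReal.ofReal ((τ - y.1) ^ (-q)))
        (g := fun y : ℝ × ℝ => ENNReal.ofReal ((y.1 - y.2) ^ (-q) * (φ' y.2 + K))) ?_ ?_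
      · exact ((measurable_rpow_c (-q)).comp (measurable_const.sub measurable_fst)).ennreal_ofReal
      · exact (((measurable_rpow_c (-q)).comp (measurable_fst.sub measurable_snd)).mul
          ((hφ'meas.comp measurable_snd).add_const K)).ennreal_ofReal
    have hFmem : ∀ s r : ℝ, τ₀ < r → r < s →
        F (s, r) = ENNReal.ofReal ((τ - s) ^ (-q)) *
          ENNReal.ofReal ((s - r) ^ (-q) * (φ' r + K)) := by
      intro s r h1 h2
      simp only [hF_def]
      exact Set.indicator_of_mem
        (show (s, r) ∈ {y : ℝ × ℝ | τ₀ < y.2 ∧ y.2 < y.1} from ⟨h1, h2⟩) _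
    have hFnot : ∀ s r : ℝ, ¬(τ₀ < r ∧ r < s) → F (s, r) = 0 := by
      intro s r h
      simp only [hF_def]
      exact Set.indicator_of_notMem
        (show (s, r) ∉ {y : ℝ × ℝ | τ₀ < y.2 ∧ y.2 < y.1} from h) _
    have hstep1 : ∀ s ∈ Set.Ioo τ₀ τ,
        ENNReal.ofReal ((τ - s) ^ (-q)) * Lf s = ∫⁻ r, F (s, r) := by
      intro s hs
      have hsJ : s ∈ Set.Ioo τ₀ (τ₀ + Tb) := ⟨hs.1, lt_trans hs.2 hτ2⟩
      have hLs : Lf s = ∫⁻ r in Set.Ioo τ₀ s,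
          ENNReal.ofReal ((s - r) ^ (-q) * (φ' r + K)) := by
        rw [hLf_def]
        refine setLIntegral_congr_fun measurableSet_Ioo ?_
        intro r hr
        dsimp only
        rw [hφ'eq r (hmemJ s hsJ r hr)]
      rw [hLs, ← lintegral_const_mul' _ _ ENNReal.ofReal_ne_top,
        ← lintegral_indicator measurableSet_Ioo]
      refine lintegral_congr fun r => ?_
      by_cases hr : r ∈ Set.Ioo τ₀ s
      · rw [Set.indicator_of_mem hr, hFmem s r hr.1 hr.2]
      · rw [Set.indicator_of_notMem hr,
          hFnot s r (fun hmem => hr ⟨hmem.1, hmem.2⟩)]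
    have hswap : ∫⁻ s in Set.Ioo τ₀ τ, ∫⁻ r, F (s, r) = ∫⁻ r, ∫⁻ s in Set.Ioo τ₀ τ, F (s, r) :=
      lintegral_lintegral_swap hFmeas.aemeasurable
    have hinner : ∀ r : ℝ, (∫⁻ s in Set.Ioo τ₀ τ, F (s, r)) ≤
        (Set.Ioo τ₀ τ).indicator (fun r => ENNReal.ofReal (4 / (1 - q) * Tb ^ (1 - q)) *
          ENNReal.ofReal ((τ - r) ^ (-q) * (φ' r + K))) r := by
      intro r
      by_cases hr : r ∈ Set.Ioo τ₀ τ
      · have hrT : 0 < τ - r := by linarith [hr.2]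
        have hzero : ∀ s ∈ Set.Ioo τ₀ τ, s ∉ Set.Ioo r τ → F (s, r) = 0 := by
          intro s hs hsr'
          exact hFnot s r (fun hmem => hsr' ⟨hmem.2, hs.2⟩)
        have hsplit : ∫⁻ s in Set.Ioo τ₀ τ, F (s, r) = ∫⁻ s in Set.Ioo r τ, F (s, r) := by
          rw [← lintegral_indicator measurableSet_Ioo, ← lintegral_indicator measurableSet_Ioo]
          refine lintegral_congr fun s => ?_
          by_cases h1 : s ∈ Set.Ioo r τ
          · rw [Set.indicator_of_mem h1,
              Set.indicator_of_mem (show s ∈ Set.Ioo τ₀ τ from ⟨lt_trans hr.1 h1.1, h1.2⟩)]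
          · rw [Set.indicator_of_notMem h1]
            by_cases h2 : s ∈ Set.Ioo τ₀ τ
            · rw [Set.indicator_of_mem h2, hzero s h2 h1]
            · rw [Set.indicator_of_notMem h2]
        have heval : ∫⁻ s in Set.Ioo r τ, F (s, r) =
            (∫⁻ s in Set.Ioo r τ, ENNReal.ofReal ((τ - s) ^ (-q) * (s - r) ^ (-q))) *
              ENNReal.ofReal (φ' r + K) := by
          rw [← lintegral_mul_const' _ _ ENNReal.ofReal_ne_top]
          refine setLIntegral_congr_fun measurableSet_Ioo ?_
          intro s hs
          have h1nn : (0:ℝ) ≤ (τ - s) ^ (-q) := Real.rpow_nonneg (by linarith [hs.2]) _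
          have h2nn : (0:ℝ) ≤ (s - r) ^ (-q) := Real.rpow_nonneg (by linarith [hs.1]) _
          dsimp only
          rw [hFmem s r hr.1 hs.1,
            ENNReal.ofReal_mul h1nn, mul_assoc, ← ENNReal.ofReal_mul h2nn]
        have hlem := lemE (show r < τ from hr.2) hq0 hq1 hq0 hq1
        have hpow : (2 / (1 - q) + 2 / (1 - q)) * (τ - r) ^ (1 - q - q) ≤
            4 / (1 - q) * Tb ^ (1 - q) * (τ - r) ^ (-q) := by
          have hrTb : τ - r ≤ Tb := by linarith [hr.1, hτ2]
          rw [show (1 - q - q) = (1 - q) + (-q) by ring, Real.rpow_add hrT,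
            show 2 / (1 - q) + 2 / (1 - q) = 4 / (1 - q) by ring]
          have h1 : (τ - r) ^ (1 - q) ≤ Tb ^ (1 - q) :=
            Real.rpow_le_rpow hrT.le hrTb h1q.le
          have h2 : (0:ℝ) ≤ (τ - r) ^ (-q) := Real.rpow_nonneg hrT.le _
          have h4 : (0:ℝ) ≤ 4 / (1 - q) := by positivity
          calc 4 / (1 - q) * ((τ - r) ^ (1 - q) * (τ - r) ^ (-q))
              ≤ 4 / (1 - q) * (Tb ^ (1 - q) * (τ - r) ^ (-q)) :=
                mul_le_mul_of_nonneg_left (mul_le_mul_of_nonneg_right h1 h2) h4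
            _ = 4 / (1 - q) * Tb ^ (1 - q) * (τ - r) ^ (-q) := by ring
        have hfinal : ENNReal.ofReal (4 / (1 - q) * Tb ^ (1 - q) * (τ - r) ^ (-q)) *
            ENNReal.ofReal (φ' r + K) = ENNReal.ofReal (4 / (1 - q) * Tb ^ (1 - q)) *
              ENNReal.ofReal ((τ - r) ^ (-q) * (φ' r + K)) := by
          rw [ENNReal.ofReal_mul (show (0:ℝ) ≤ 4 / (1 - q) * Tb ^ (1 - q) by positivity),
            mul_assoc, ← ENNReal.ofReal_mul (Real.rpow_nonneg hrT.le _)]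
        calc ∫⁻ s in Set.Ioo τ₀ τ, F (s, r)
            = (∫⁻ s in Set.Ioo r τ, ENNReal.ofReal ((τ - s) ^ (-q) * (s - r) ^ (-q))) *
              ENNReal.ofReal (φ' r + K) := by rw [hsplit, heval]
          _ ≤ ENNReal.ofReal ((2 / (1 - q) + 2 / (1 - q)) * (τ - r) ^ (1 - q - q)) *
              ENNReal.ofReal (φ' r + K) := mul_le_mul_left hlem _
          _ ≤ ENNReal.ofReal (4 / (1 - q) * Tb ^ (1 - q) * (τ - r) ^ (-q)) *
              ENNReal.ofReal (φ' r + K) :=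
                mul_le_mul_left (ENNReal.ofReal_le_ofReal hpow) _
          _ = (Set.Ioo τ₀ τ).indicator (fun r => ENNReal.ofReal (4 / (1 - q) * Tb ^ (1 - q)) *
              ENNReal.ofReal ((τ - r) ^ (-q) * (φ' r + K))) r := by
                rw [Set.indicator_of_mem hr, hfinal]
      · rw [Set.indicator_of_notMem hr]
        have hzero : ∀ s ∈ Set.Ioo τ₀ τ, F (s, r) = (fun _ => (0:ℝ≥0∞)) s := by
          intro s hs
          exact hFnot s r (fun hmem => hr ⟨hmem.1, lt_trans hmem.2 hs.2⟩)
        rw [setLIntegral_congr_fun measurableSet_Ioo hzero,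
          lintegral_zero]
    calc ∫⁻ s in Set.Ioo τ₀ τ, ENNReal.ofReal ((τ - s) ^ (-q)) * Lf s
        = ∫⁻ s in Set.Ioo τ₀ τ, ∫⁻ r, F (s, r) :=
          setLIntegral_congr_fun measurableSet_Ioo hstep1
      _ = ∫⁻ r, ∫⁻ s in Set.Ioo τ₀ τ, F (s, r) := hswap
      _ ≤ ∫⁻ r, (Set.Ioo τ₀ τ).indicator (fun r => ENNReal.ofReal (4 / (1 - q) * Tb ^ (1 - q)) *
            ENNReal.ofReal ((τ - r) ^ (-q) * (φ' r + K))) r := lintegral_mono hinner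
      _ = ∫⁻ r in Set.Ioo τ₀ τ, ENNReal.ofReal (4 / (1 - q) * Tb ^ (1 - q)) *
            ENNReal.ofReal ((τ - r) ^ (-q) * (φ' r + K)) :=
          lintegral_indicator measurableSet_Ioo _
      _ = ENNReal.ofReal (4 / (1 - q) * Tb ^ (1 - q)) *
            ∫⁻ r in Set.Ioo τ₀ τ, ENNReal.ofReal ((τ - r) ^ (-q) * (φ' r + K)) :=
          lintegral_const_mul' _ _ ENNReal.ofReal_ne_top
      _ = ENNReal.ofReal (4 / (1 - q) * Tb ^ (1 - q)) * Lf τ := by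
          rw [hLf_def]
          congr 1
          refine setLIntegral_congr_fun measurableSet_Ioo ?_
          intro r hr
          dsimp only
          rw [hφ'eq r (hmemJ τ hτJ r hr)]
  -- Step 2: the three-term bound on Lf τ
  set f₁ : ℝ → ℝ≥0∞ := fun s =>
    ENNReal.ofReal (2 * C₁ * ((τ - s) ^ (-q) * (s - τ₀) ^ (-(1/2:ℝ)))) with hf₁_def
  set f₂ : ℝ → ℝ≥0∞ := fun s =>
    (ENNReal.ofReal C₂ * 2) * (ENNReal.ofReal ((τ - s) ^ (-q)) * Lf s) with hf₂_def
  set f₃ : ℝ → ℝ≥0∞ := fun s => ENNReal.ofReal (K * (τ - s) ^ (-q)) with hf₃_def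
  have hf₁meas : Measurable f₁ := by
    apply Measurable.ennreal_ofReal
    exact (measurable_const.mul (((measurable_rpow_c (-q)).comp
      (measurable_const.sub measurable_id)).mul ((measurable_rpow_c (-(1/2:ℝ))).comp
        (measurable_id.sub measurable_const))))
  have hf₃meas : Measurable f₃ := by
    apply Measurable.ennreal_ofReal
    exact measurable_const.mul ((measurable_rpow_c (-q)).comp
      (measurable_const.sub measurable_id))
  have hpoint : ∀ s ∈ Set.Ioo τ₀ τ,
      ENNReal.ofReal ((τ - s) ^ (-q) * (φ s + K)) ≤ f₁ s + (f₂ s + f₃ s) := by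
    intro s hs
    have hsJ : s ∈ Set.Ioo τ₀ (τ₀ + Tb) := ⟨hs.1, lt_trans hs.2 hτ2⟩
    have hker0 : (0:ℝ) ≤ (τ - s) ^ (-q) := Real.rpow_nonneg (by linarith [hs.2]) _
    have hIs0 : 0 ≤ ∫ x in Set.Ioo τ₀ s, (1 - Real.exp (-(s - x))) ^ (-q) * (φ x + K) := by
      apply setIntegral_nonneg measurableSet_Ioo
      intro x hx
      exact mul_nonneg (Real.rpow_nonneg (one_sub_exp_pos (hsr s hsJ x hx).1).le _)
        (add_nonneg (hpos x (hmemJ s hsJ x hx)) hK)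
    calc ENNReal.ofReal ((τ - s) ^ (-q) * (φ s + K))
        ≤ ENNReal.ofReal ((τ - s) ^ (-q) *
            (2 * C₁ * (s - τ₀) ^ (-(1/2:ℝ)) +
              C₂ * (∫ x in Set.Ioo τ₀ s, (1 - Real.exp (-(s - x))) ^ (-q) * (φ x + K)) + K)) :=
          ENNReal.ofReal_le_ofReal (mul_le_mul_of_nonneg_left (hφK s hsJ) hker0)
      _ = ENNReal.ofReal (2 * C₁ * ((τ - s) ^ (-q) * (s - τ₀) ^ (-(1/2:ℝ))) +
            ((τ - s) ^ (-q) * (C₂ * (∫ x in Set.Ioo τ₀ s,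
              (1 - Real.exp (-(s - x))) ^ (-q) * (φ x + K))) + K * (τ - s) ^ (-q))) := by
          congr 1
          ring
      _ ≤ ENNReal.ofReal (2 * C₁ * ((τ - s) ^ (-q) * (s - τ₀) ^ (-(1/2:ℝ)))) +
            (ENNReal.ofReal ((τ - s) ^ (-q) * (C₂ * (∫ x in Set.Ioo τ₀ s,
              (1 - Real.exp (-(s - x))) ^ (-q) * (φ x + K)))) +
              ENNReal.ofReal (K * (τ - s) ^ (-q))) :=
          le_trans ENNReal.ofReal_add_le (add_le_add le_rfl ENNReal.ofReal_add_le)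
      _ ≤ f₁ s + (f₂ s + f₃ s) := by
          refine add_le_add le_rfl ?_
          refine add_le_add ?_ le_rfl
          rw [ENNReal.ofReal_mul hker0, ENNReal.ofReal_mul hC₂]
          calc ENNReal.ofReal ((τ - s) ^ (-q)) * (ENNReal.ofReal C₂ *
                ENNReal.ofReal (∫ x in Set.Ioo τ₀ s,
                  (1 - Real.exp (-(s - x))) ^ (-q) * (φ x + K)))
              ≤ ENNReal.ofReal ((τ - s) ^ (-q)) * (ENNReal.ofReal C₂ * (2 * Lf s)) := by
                apply mul_le_mul_right
                apply mul_le_mul_right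
                exact hIle s hsJ
            _ = f₂ s := by simp only [hf₂_def]; ring
  have hB1 : ∫⁻ s in Set.Ioo τ₀ τ, f₁ s ≤
      ENNReal.ofReal (2 * C₁ * CE * T ^ (1 - q - 1/2)) := by
    have h2C₁ : (0:ℝ) ≤ 2 * C₁ := by linarith
    calc ∫⁻ s in Set.Ioo τ₀ τ, f₁ s
        = ∫⁻ s in Set.Ioo τ₀ τ, ENNReal.ofReal (2 * C₁) *
            ENNReal.ofReal ((τ - s) ^ (-q) * (s - τ₀) ^ (-(1/2:ℝ))) := by
          refine setLIntegral_congr_fun measurableSet_Ioo ?_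
          intro s hs
          simp only [hf₁_def]
          rw [ENNReal.ofReal_mul h2C₁]
      _ = ENNReal.ofReal (2 * C₁) *
            ∫⁻ s in Set.Ioo τ₀ τ, ENNReal.ofReal ((τ - s) ^ (-q) * (s - τ₀) ^ (-(1/2:ℝ))) :=
          lintegral_const_mul' _ _ ENNReal.ofReal_ne_top
      _ ≤ ENNReal.ofReal (2 * C₁) *
            ENNReal.ofReal ((2 / (1 - q) + 2 / (1 - 1/2)) * (τ - τ₀) ^ (1 - q - 1/2)) :=
          mul_le_mul_right (lemE hτ1 hq0 hq1 (by norm_num) (by norm_num)) _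
      _ ≤ ENNReal.ofReal (2 * C₁ * CE * T ^ (1 - q - 1/2)) := by
          rw [← ENNReal.ofReal_mul h2C₁]
          apply ENNReal.ofReal_le_ofReal
          have hTnn : (0:ℝ) ≤ T ^ (1 - q - 1/2) := Real.rpow_nonneg hT0.le _
          have hce : 2 / (1 - q) + 2 / (1 - 1/2) ≤ CE := by
            rw [hCE_def]
            have h1 : 0 < 4 / (1 - q) := by positivity
            norm_num
            linarith
          calc 2 * C₁ * ((2 / (1 - q) + 2 / (1 - 1/2)) * T ^ (1 - q - 1/2))
              ≤ 2 * C₁ * (CE * T ^ (1 - q - 1/2)) := by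
                apply mul_le_mul_of_nonneg_left _ h2C₁
                exact mul_le_mul_of_nonneg_right hce hTnn
            _ = 2 * C₁ * CE * T ^ (1 - q - 1/2) := by ring
  have hB2 : ∫⁻ s in Set.Ioo τ₀ τ, f₂ s ≤ ENNReal.ofReal (1/2) * Lf τ := by
    calc ∫⁻ s in Set.Ioo τ₀ τ, f₂ s
        = (ENNReal.ofReal C₂ * 2) *
            ∫⁻ s in Set.Ioo τ₀ τ, ENNReal.ofReal ((τ - s) ^ (-q)) * Lf s :=
          lintegral_const_mul' _ _
            (ENNReal.mul_ne_top ENNReal.ofReal_ne_top (by simp))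
      _ ≤ (ENNReal.ofReal C₂ * 2) * (ENNReal.ofReal (4 / (1 - q) * Tb ^ (1 - q)) * Lf τ) :=
          mul_le_mul_right keyB _
      _ = (ENNReal.ofReal (C₂ * (2 * (4 / (1 - q) * Tb ^ (1 - q))))) * Lf τ := by
          rw [ENNReal.ofReal_mul hC₂, ENNReal.ofReal_mul (by norm_num : (0:ℝ) ≤ 2)]
          norm_num
          ring
      _ ≤ ENNReal.ofReal (1/2) * Lf τ := by
          apply mul_le_mul_left
          apply ENNReal.ofReal_le_ofReal
          have hTbnn : (0:ℝ) ≤ Tb ^ (1 - q) := Real.rpow_nonneg hTb0.le _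
          have hD' : 8 * C₂ / (1 - q) ≤ D := by
            have h1 : 8 * C₂ * (1 / (1 - q)) ≤ 8 * C₂ * CE :=
              mul_le_mul_of_nonneg_left hCE1 (by linarith)
            have h2 : 0 ≤ 4 * C₂ * K / (1 - q) := by positivity
            have h3 : 8 * C₂ / (1 - q) = 8 * C₂ * (1 / (1 - q)) := by ring
            rw [hD_def, h3]; linarith
          calc C₂ * (2 * (4 / (1 - q) * Tb ^ (1 - q))) = (8 * C₂ / (1 - q)) * Tb ^ (1 - q) := by
                ring
            _ ≤ D * Tb ^ (1 - q) := mul_le_mul_of_nonneg_right hD' hTbnn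
            _ ≤ D * (1 / (2 * D)) := mul_le_mul_of_nonneg_left hTbkey hD0.le
            _ = 1/2 := by field_simp
  have hB3 : ∫⁻ s in Set.Ioo τ₀ τ, f₃ s = ENNReal.ofReal (K * (T ^ (1 - q) / (1 - q))) := by
    calc ∫⁻ s in Set.Ioo τ₀ τ, f₃ s
        = ∫⁻ s in Set.Ioo τ₀ τ, ENNReal.ofReal K * ENNReal.ofReal ((τ - s) ^ (-q)) := by
          refine setLIntegral_congr_fun measurableSet_Ioo ?_
          intro s hs
          simp only [hf₃_def]
          rw [ENNReal.ofReal_mul hK]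
      _ = ENNReal.ofReal K * ∫⁻ s in Set.Ioo τ₀ τ, ENNReal.ofReal ((τ - s) ^ (-q)) :=
          lintegral_const_mul' _ _ ENNReal.ofReal_ne_top
      _ = ENNReal.ofReal K * ENNReal.ofReal ((τ - τ₀) ^ (1 - q) / (1 - q)) := by
          rw [lint_right hτ1 hq0 hq1]
      _ = ENNReal.ofReal (K * (T ^ (1 - q) / (1 - q))) := by
          rw [← ENNReal.ofReal_mul hK]
  -- combine
  set x₁ : ℝ := 2 * C₁ * CE * T ^ (1 - q - 1/2) with hx₁_def
  set x₃ : ℝ := K * (T ^ (1 - q) / (1 - q)) with hx₃_def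
  have hx₁0 : 0 ≤ x₁ := by
    rw [hx₁_def]
    have := Real.rpow_nonneg hT0.le (1 - q - 1/2)
    positivity
  have hx₃0 : 0 ≤ x₃ := by
    rw [hx₃_def]
    have := Real.rpow_nonneg hT0.le (1 - q)
    positivity
  have hchain : Lf τ ≤ ENNReal.ofReal x₁ + (ENNReal.ofReal (1/2) * Lf τ +
      ENNReal.ofReal x₃) := by
    calc Lf τ ≤ ∫⁻ s in Set.Ioo τ₀ τ, (f₁ s + (f₂ s + f₃ s)) := by
          rw [hLf_def]
          exact setLIntegral_mono' measurableSet_Ioo hpoint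
      _ = (∫⁻ s in Set.Ioo τ₀ τ, f₁ s) + ∫⁻ s in Set.Ioo τ₀ τ, (f₂ s + f₃ s) :=
          lintegral_add_left hf₁meas _
      _ = (∫⁻ s in Set.Ioo τ₀ τ, f₁ s) + ((∫⁻ s in Set.Ioo τ₀ τ, f₂ s) +
            ∫⁻ s in Set.Ioo τ₀ τ, f₃ s) := by
          rw [lintegral_add_right _ hf₃meas]
      _ ≤ ENNReal.ofReal x₁ + (ENNReal.ofReal (1/2) * Lf τ + ENNReal.ofReal x₃) := by
          apply add_le_add hB1
          exact add_le_add hB2 (le_of_eq hB3)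
  -- absorption
  have hLτfin : Lf τ ≠ ⊤ := hLfin τ hτJ
  set ℓ : ℝ := (Lf τ).toReal with hℓ_def
  have hℓ0 : 0 ≤ ℓ := ENNReal.toReal_nonneg
  have hLeq : Lf τ = ENNReal.ofReal ℓ := (ENNReal.ofReal_toReal hLτfin).symm
  have hreal : ℓ ≤ x₁ + (1/2 * ℓ + x₃) := by
    have h := hchain
    rw [hLeq, ← ENNReal.ofReal_mul (by norm_num : (0:ℝ) ≤ 1/2),
      ← ENNReal.ofReal_add (by positivity) hx₃0,
      ← ENNReal.ofReal_add hx₁0 (by positivity)] at h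
    exact (ENNReal.ofReal_le_ofReal_iff (by positivity)).1 h
  have hℓ2 : ℓ ≤ 2 * (x₁ + x₃) := by linarith
  -- conclude for the Bochner integral
  have hIτ : (∫ s in Set.Ioo τ₀ τ, (1 - Real.exp (-(τ - s))) ^ (-q) * (φ s + K)) ≤
      4 * (x₁ + x₃) := by
    have h := hIle τ hτJ
    rw [hLeq] at h
    have h2 : (2:ℝ≥0∞) * ENNReal.ofReal ℓ = ENNReal.ofReal (2 * ℓ) := by
      rw [ENNReal.ofReal_mul (by norm_num : (0:ℝ) ≤ 2)]
      norm_num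
    rw [h2] at h
    have h3 : ENNReal.ofReal (2 * ℓ) ≤ ENNReal.ofReal (4 * (x₁ + x₃)) :=
      ENNReal.ofReal_le_ofReal (by linarith)
    exact (ENNReal.ofReal_le_ofReal_iff (by positivity)).1 (le_trans h h3)
  -- final arithmetic
  have hAdef : (0:ℝ) < 1 - Real.exp (-T) := one_sub_exp_pos hT0
  set A : ℝ := (1 - Real.exp (-T)) ^ (-(1/2:ℝ)) with hA_def
  have hA1 : 1 ≤ A := one_le_aker hT0 (by norm_num)
  have hA0 : 0 < A := lt_of_lt_of_le one_pos hA1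
  have h_half : T ^ (-(1/2:ℝ)) ≤ A := le_aker hT0 (by norm_num)
  have hTq : T ^ (1 - q) ≤ 1 / (2 * D) :=
    le_trans (Real.rpow_le_rpow hT0.le hTltTb.le h1q.le) hTbkey
  have hsplitT : T ^ (1 - q - 1/2) = T ^ (1 - q) * T ^ (-(1/2:ℝ)) := by
    rw [show (1 - q - 1/2 : ℝ) = (1 - q) + (-(1/2:ℝ)) by ring, Real.rpow_add hT0]
  have hx₁A : x₁ ≤ 2 * C₁ * CE * ((1 / (2 * D)) * A) := by
    rw [hx₁_def, hsplitT]
    apply mul_le_mul_of_nonneg_left _ (by positivity : (0:ℝ) ≤ 2 * C₁ * CE)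
    apply mul_le_mul hTq h_half (Real.rpow_nonneg hT0.le _) (by positivity)
  have h41 : 4 * C₂ * x₁ ≤ 1/2 * (C₁ * A) := by
    have hc₁half : 8 * C₂ * CE * (1 / (2 * D)) ≤ 1/2 := by
      have hD' : 8 * C₂ * CE ≤ D := by
        have h2 : 0 ≤ 4 * C₂ * K / (1 - q) := by positivity
        rw [hD_def]; linarith
      calc 8 * C₂ * CE * (1 / (2 * D)) ≤ D * (1 / (2 * D)) :=
            mul_le_mul_of_nonneg_right hD' (by positivity)
        _ = 1/2 := by field_simp
    calc 4 * C₂ * x₁ ≤ 4 * C₂ * (2 * C₁ * CE * ((1 / (2 * D)) * A)) :=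
          mul_le_mul_of_nonneg_left hx₁A (by positivity)
      _ = (8 * C₂ * CE * (1 / (2 * D))) * (C₁ * A) := by ring
      _ ≤ 1/2 * (C₁ * A) :=
          mul_le_mul_of_nonneg_right hc₁half (mul_nonneg hC₁ hA0.le)
  have h43 : 4 * C₂ * x₃ ≤ 1/2 * A := by
    have hle_D : 4 * C₂ * K / (1 - q) ≤ D := by
      have h1 : 0 ≤ 8 * C₂ * CE := by positivity
      rw [hD_def]; linarith
    have hc : 4 * C₂ * x₃ ≤ 1/2 := by
      calc 4 * C₂ * x₃ = (4 * C₂ * K / (1 - q)) * T ^ (1 - q) := by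
            rw [hx₃_def]; ring
        _ ≤ D * (1 / (2 * D)) :=
            mul_le_mul hle_D hTq (Real.rpow_nonneg hT0.le _) hD0.le
        _ = 1/2 := by field_simp
    linarith only [hc, hA1]
  have hfin := hineq τ hτJ
  have hC₂I : C₂ * (∫ s in Set.Ioo τ₀ τ, (1 - Real.exp (-(τ - s))) ^ (-q) * (φ s + K)) ≤
      C₂ * (4 * (x₁ + x₃)) := mul_le_mul_of_nonneg_left hIτ hC₂
  have hCA : 0 ≤ C₁ * A := mul_nonneg hC₁ hA0.le
  have hexpand : C₂ * (4 * (x₁ + x₃)) = 4 * C₂ * x₁ + 4 * C₂ * x₃ := by ring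
  have h44 : C₂ * (4 * (x₁ + x₃)) ≤ 1/2 * (C₁ * A) + 1/2 * A := by
    rw [hexpand]; linarith only [h41, h43]
  have hstep : φ τ ≤ C₁ * A + (1/2 * (C₁ * A) + 1/2 * A) := by
    linarith only [hfin, hC₂I, h44]
  have hlast : C₁ * A + (1/2 * (C₁ * A) + 1/2 * A) ≤ 2 * (C₁ + 1) * A := by
    have hexp2 : 2 * (C₁ + 1) * A = 2 * (C₁ * A) + 2 * A := by ring
    linarith only [hCA, hA0, hexp2]
  linarith only [hstep, hlast]
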